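/- arXiv:math/0201125 — 4 statements merged into one kernel-verified Lean document; each statement's English description precedes it below -/
import Mathlib

section
/- Let k be a field and A = k[t]/(t³). An A-module M is flat if and only if both the map tM/t²M → t²M induced by multiplication by t and the map M/tM → t²M induced by multiplication by t² are isomorphisms, if and only if M is a free A-module. -/
open Polynomial

set_option maxHeartbeats 1000000
set_option synthInstance.maxHeartbeats 1000000

noncomputable section

/-- The ring `A = k[t]/(t³)`. -/
abbrev A3 (k : Type*) [Field k] : Type _ :=
  Polynomial k ⧸ Ideal.span {(X : Polynomial k) ^ 3}

/-- The class of `t` in `k[t]/(t³)`. -/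
noncomputable def tA3 (k : Type*) [Field k] : A3 k :=
  Ideal.Quotient.mk _ (X : Polynomial k)

lemma tA3_cube (k : Type*) [Field k] : (tA3 k) ^ 3 = 0 := by
  have h : (tA3 k) ^ 3 =
      Ideal.Quotient.mk (Ideal.span {(X : Polynomial k) ^ 3}) ((X : Polynomial k) ^ 3) := by
    simp [tA3, map_pow]
  rw [h, Ideal.Quotient.eq_zero_iff_mem]
  exact Ideal.subset_span rfl

variable (k : Type*) [Field k] (M : Type*) [AddCommGroup M] [Module (A3 k) M]

/-- The submodule `tM ⊆ M`. -/
def tSub : Submodule (A3 k) M := LinearMap.range (LinearMap.lsmul (A3 k) M (tA3 k))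

/-- The submodule `t²M ⊆ M`. -/
def t2Sub : Submodule (A3 k) M := LinearMap.range (LinearMap.lsmul (A3 k) M (tA3 k ^ 2))

/-- The map `tM/t²M → t²M` induced by multiplication by `t`. -/
def mulTmap : (tSub k M ⧸ (t2Sub k M).comap (tSub k M).subtype) →ₗ[A3 k] t2Sub k M :=
  Submodule.liftQ ((t2Sub k M).comap (tSub k M).subtype)
    (LinearMap.codRestrict (t2Sub k M)
      ((LinearMap.lsmul (A3 k) M (tA3 k)).comp (tSub k M).subtype)
      (by
        rintro ⟨x, hx⟩
        obtain ⟨y, rfl⟩ := LinearMap.mem_range.mp hx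
        exact ⟨y, by simp [smul_smul, sq]⟩))
    (by
      rintro ⟨x, hx⟩ h
      rw [Submodule.mem_comap] at h
      obtain ⟨y, rfl⟩ := LinearMap.mem_range.mp h
      rw [LinearMap.mem_ker]
      apply Subtype.ext
      have h3 : tA3 k * tA3 k ^ 2 = 0 := by
        rw [← pow_succ']
        exact tA3_cube k
      simp only [LinearMap.codRestrict_apply, LinearMap.comp_apply, Submodule.coe_subtype,
        LinearMap.lsmul_apply, smul_smul, h3, Submodule.coe_zero]
      exact zero_smul (A3 k) y)

/-- The map `M/tM → t²M` induced by multiplication by `t²`. -/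
def mulT2map : (M ⧸ tSub k M) →ₗ[A3 k] t2Sub k M :=
  Submodule.liftQ (tSub k M)
    (LinearMap.codRestrict (t2Sub k M) (LinearMap.lsmul (A3 k) M (tA3 k ^ 2))
      (fun m => LinearMap.mem_range_self _ m))
    (by
      intro x hx
      obtain ⟨y, rfl⟩ := LinearMap.mem_range.mp hx
      rw [LinearMap.mem_ker]
      apply Subtype.ext
      have h3 : tA3 k ^ 2 * tA3 k = 0 := by
        rw [← pow_succ]
        exact tA3_cube k
      simp only [LinearMap.codRestrict_apply, LinearMap.comp_apply, Submodule.coe_subtype,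
        LinearMap.lsmul_apply, smul_smul, h3, Submodule.coe_zero]
      show (tA3 k ^ 2) • (tA3 k • y) = 0
      rw [smul_smul, h3]
      exact zero_smul (A3 k) y)

lemma A3.eq_t2_mul_of_t_mul_eq_zero (a : A3 k) (h : tA3 k * a = 0) :
    ∃ b, a = tA3 k ^ 2 * b := by
  obtain ⟨p, rfl⟩ := Ideal.Quotient.mk_surjective a
  have hmem : (X : Polynomial k) * p ∈ Ideal.span {(X : Polynomial k) ^ 3} := by
    rw [← Ideal.Quotient.eq_zero_iff_mem, map_mul]
    exact h
  rw [Ideal.mem_span_singleton] at hmem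
  obtain ⟨q, hq⟩ := hmem
  have hX : (X : Polynomial k) ≠ 0 := X_ne_zero
  have hp : p = X ^ 2 * q := by
    apply mul_left_cancel₀ hX
    rw [hq]; ring
  refine ⟨Ideal.Quotient.mk _ q, ?_⟩
  rw [hp, map_mul, map_pow]
  rfl

lemma A3.eq_t_mul_of_t2_mul_eq_zero (a : A3 k) (h : tA3 k ^ 2 * a = 0) :
    ∃ b, a = tA3 k * b := by
  obtain ⟨p, rfl⟩ := Ideal.Quotient.mk_surjective a
  have hmem : (X : Polynomial k) ^ 2 * p ∈ Ideal.span {(X : Polynomial k) ^ 3} := by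
    rw [← Ideal.Quotient.eq_zero_iff_mem, map_mul, map_pow]
    exact h
  rw [Ideal.mem_span_singleton] at hmem
  obtain ⟨q, hq⟩ := hmem
  have hX : (X : Polynomial k) ^ 2 ≠ 0 := pow_ne_zero _ X_ne_zero
  have hp : p = X * q := by
    apply mul_left_cancel₀ hX
    rw [hq]; ring
  refine ⟨Ideal.Quotient.mk _ q, ?_⟩
  rw [hp, map_mul]
  rfl

lemma A3.exists_repr (a : A3 k) : ∃ c₀ c₁ c₂ : k,
    a = algebraMap k (A3 k) c₀ + algebraMap k (A3 k) c₁ * tA3 k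
      + algebraMap k (A3 k) c₂ * tA3 k ^ 2 := by
  obtain ⟨p, rfl⟩ := Ideal.Quotient.mk_surjective a
  have hm : ((X : Polynomial k) ^ 3).Monic := monic_X_pow 3
  have hne : ((X : Polynomial k) ^ 3) ≠ 1 := by
    intro h
    have := congrArg natDegree h
    simp [natDegree_X_pow] at this
  set r := p %ₘ ((X : Polynomial k) ^ 3) with hr
  have hmk : Ideal.Quotient.mk (Ideal.span {(X : Polynomial k) ^ 3}) p
      = Ideal.Quotient.mk _ r := by
    have hdiv := modByMonic_add_div p (X ^ 3)
    rw [Ideal.Quotient.mk_eq_mk_iff_sub_mem]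
    have : p - r = X ^ 3 * (p /ₘ X ^ 3) := by
      linear_combination -hdiv
    rw [this]
    exact Ideal.mem_span_singleton.mpr ⟨_, rfl⟩
  have hdeg : r.natDegree < 3 := by
    have := natDegree_modByMonic_lt p hm hne
    simpa [natDegree_X_pow] using this
  refine ⟨r.coeff 0, r.coeff 1, r.coeff 2, ?_⟩
  rw [hmk]
  conv_lhs => rw [r.as_sum_range' 3 hdeg]
  rw [Finset.sum_range_succ, Finset.sum_range_succ, Finset.sum_range_one,
    ← C_mul_X_pow_eq_monomial, ← C_mul_X_pow_eq_monomial, ← C_mul_X_pow_eq_monomial,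
    pow_zero, mul_one, pow_one]
  simp only [map_add, map_mul, map_pow]
  rfl

lemma A3.exact_t2_t :
    Function.Exact (LinearMap.lsmul (A3 k) (A3 k) (tA3 k ^ 2))
      (LinearMap.lsmul (A3 k) (A3 k) (tA3 k)) := by
  intro a
  simp only [LinearMap.lsmul_apply, smul_eq_mul, Set.mem_range]
  constructor
  · intro h
    obtain ⟨b, hb⟩ := A3.eq_t2_mul_of_t_mul_eq_zero k a h
    exact ⟨b, hb.symm⟩
  · rintro ⟨b, rfl⟩
    have : tA3 k * (tA3 k ^ 2 * b) = tA3 k ^ 3 * b := by ring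
    rw [this, tA3_cube, zero_mul]

lemma A3.exact_t_t2 :
    Function.Exact (LinearMap.lsmul (A3 k) (A3 k) (tA3 k))
      (LinearMap.lsmul (A3 k) (A3 k) (tA3 k ^ 2)) := by
  intro a
  simp only [LinearMap.lsmul_apply, smul_eq_mul, Set.mem_range]
  constructor
  · intro h
    obtain ⟨b, hb⟩ := A3.eq_t_mul_of_t2_mul_eq_zero k a h
    exact ⟨b, hb.symm⟩
  · rintro ⟨b, rfl⟩
    have : tA3 k ^ 2 * (tA3 k * b) = tA3 k ^ 3 * b := by ring
    rw [this, tA3_cube, zero_mul]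

lemma lsmul_ladder (a : A3 k) :
    LinearMap.lsmul (A3 k) M a ∘ₗ (TensorProduct.rid (A3 k) M : TensorProduct (A3 k) M (A3 k) ≃ₗ[A3 k] M).toLinearMap
      = (TensorProduct.rid (A3 k) M).toLinearMap ∘ₗ
        LinearMap.lTensor M (LinearMap.lsmul (A3 k) (A3 k) a) := by
  apply TensorProduct.ext'
  intro x b
  simp [TensorProduct.rid_tmul, smul_smul, mul_comm]

lemma exact_of_flat [Module.Flat (A3 k) M] {a b : A3 k}
    (h : Function.Exact (LinearMap.lsmul (A3 k) (A3 k) a) (LinearMap.lsmul (A3 k) (A3 k) b)) :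
    Function.Exact (LinearMap.lsmul (A3 k) M a) (LinearMap.lsmul (A3 k) M b) := by
  have ht := Module.Flat.lTensor_exact M h
  exact Function.Exact.of_ladder_linearEquiv_of_exact
    (e₁ := TensorProduct.rid (A3 k) M) (e₂ := TensorProduct.rid (A3 k) M)
    (e₃ := TensorProduct.rid (A3 k) M)
    (lsmul_ladder k M a) (lsmul_ladder k M b) ht

lemma flat_ker_t [Module.Flat (A3 k) M] (x : M) (hx : tA3 k • x = 0) : x ∈ t2Sub k M := by
  have h := (exact_of_flat k M (A3.exact_t2_t k)) x
  simp only [LinearMap.lsmul_apply] at h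
  obtain ⟨y, hy⟩ := h.mp hx
  exact ⟨y, hy⟩

lemma flat_ker_t2 [Module.Flat (A3 k) M] (x : M) (hx : tA3 k ^ 2 • x = 0) : x ∈ tSub k M := by
  have h := (exact_of_flat k M (A3.exact_t_t2 k)) x
  simp only [LinearMap.lsmul_apply] at h
  obtain ⟨y, hy⟩ := h.mp hx
  exact ⟨y, hy⟩

lemma t2Sub_le_tSub : t2Sub k M ≤ tSub k M := by
  rintro x ⟨y, rfl⟩
  exact ⟨tA3 k • y, by rw [LinearMap.lsmul_apply, LinearMap.lsmul_apply, smul_smul, ← sq]⟩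

lemma free_of_conditions
    (hk1 : ∀ x : M, tA3 k • x = 0 → x ∈ t2Sub k M)
    (hk2 : ∀ x : M, tA3 k ^ 2 • x = 0 → x ∈ tSub k M) :
    Module.Free (A3 k) M := by
  letI instk : Module k (M ⧸ tSub k M) := Module.compHom _ (algebraMap k (A3 k))
  haveI : IsScalarTower k (A3 k) (M ⧸ tSub k M) := ⟨fun c a v => by
    show ((c • a) : A3 k) • v = algebraMap k (A3 k) c • (a • v)
    rw [show ((c • a) : A3 k) = algebraMap k (A3 k) c * a from Algebra.smul_def c a]; exact mul_smul (algebraMap k (A3 k) c) a v⟩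
  have hsmul : ∀ (c : k) (v : M ⧸ tSub k M), c • v = algebraMap k (A3 k) c • v :=
    fun _ _ => rfl
  let b := Module.Basis.ofVectorSpace k (M ⧸ tSub k M)
  have hms : ∀ i, ∃ y : M, Submodule.Quotient.mk y = b i :=
    fun i => Submodule.Quotient.mk_surjective _ (b i)
  choose m hm using hms
  set N := Submodule.span (A3 k) (Set.range m) with hN
  have hmkQ : ∀ (s : Finset _) (c : _ → k),
      (tSub k M).mkQ (∑ i ∈ s, algebraMap k (A3 k) (c i) • m i) = ∑ i ∈ s, c i • b i := by
    intro s c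
    rw [map_sum]
    refine Finset.sum_congr rfl fun i _ => ?_
    rw [LinearMap.map_smul, Submodule.mkQ_apply, hm, hsmul]
  have hcoef : ∀ (s : Finset _) (c : _ → k),
      (∑ i ∈ s, algebraMap k (A3 k) (c i) • m i) ∈ tSub k M → ∀ i ∈ s, c i = 0 := by
    intro s c hx
    refine linearIndependent_iff'.mp b.linearIndependent s c ?_
    rw [← hmkQ s c, Submodule.mkQ_apply, Submodule.Quotient.mk_eq_zero]
    exact hx
  -- spanning
  have hmap : Submodule.map (tSub k M).mkQ N = ⊤ := by
    rw [hN, Submodule.map_span]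
    have hcomp : ⇑(tSub k M).mkQ ∘ m = ⇑b := funext fun i => hm i
    rw [← Set.range_comp, hcomp, eq_top_iff]
    intro x _
    have hx : x ∈ Submodule.span k (Set.range ⇑b) := by rw [b.span_eq]; trivial
    have hle : Submodule.span k (Set.range ⇑b) ≤
        (Submodule.span (A3 k) (Set.range ⇑b)).restrictScalars k :=
      Submodule.span_le.mpr fun y hy => Submodule.subset_span hy
    exact hle hx
  have htop : tSub k M ⊔ N = ⊤ := (Submodule.map_mkQ_eq_top _ _).mp hmap
  have hmem_sup : ∀ x : M, ∃ y z, z ∈ N ∧ x = tA3 k • y + z := by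
    intro x
    have hx : x ∈ tSub k M ⊔ N := htop ▸ Submodule.mem_top
    obtain ⟨y, hy, z, hz, hyz⟩ := Submodule.mem_sup.mp hx
    obtain ⟨w, hw⟩ := hy
    rw [LinearMap.lsmul_apply] at hw
    exact ⟨w, z, hz, by rw [hw, hyz]⟩
  have h2N : ∀ x : M, tA3 k • (tA3 k • x) ∈ N := by
    intro x
    obtain ⟨y, z, hz, rfl⟩ := hmem_sup x
    have ht3 : tA3 k • tA3 k • tA3 k • y = 0 := by
      rw [smul_smul, smul_smul, show tA3 k * tA3 k * tA3 k = tA3 k ^ 3 by ring,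
        tA3_cube]
      exact zero_smul (A3 k) y
    rw [smul_add, smul_add, ht3, zero_add]
    exact Submodule.smul_mem _ _ (Submodule.smul_mem _ _ hz)
  have h1N : ∀ x : M, tA3 k • x ∈ N := by
    intro x
    obtain ⟨y, z, hz, rfl⟩ := hmem_sup x
    rw [smul_add]
    exact Submodule.add_mem _ (h2N y) (Submodule.smul_mem _ _ hz)
  have hNtop : ∀ x : M, x ∈ N := by
    intro x
    obtain ⟨y, z, hz, rfl⟩ := hmem_sup x
    exact Submodule.add_mem _ (h1N y) hz
  -- linear independence
  have hli : LinearIndependent (A3 k) m := by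
    rw [linearIndependent_iff']
    intro s g hsum i hi
    choose c0 c1 c2 hg using fun j => A3.exists_repr k (g j)
    set y0 := ∑ j ∈ s, algebraMap k (A3 k) (c0 j) • m j with hy0def
    set y1 := ∑ j ∈ s, algebraMap k (A3 k) (c1 j) • m j with hy1def
    set y2 := ∑ j ∈ s, algebraMap k (A3 k) (c2 j) • m j with hy2def
    have hdecomp : y0 + tA3 k • y1 + tA3 k ^ 2 • y2 = 0 := by
      rw [hy0def, hy1def, hy2def, Finset.smul_sum, Finset.smul_sum,
        ← Finset.sum_add_distrib, ← Finset.sum_add_distrib, ← hsum]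
      refine Finset.sum_congr rfl fun j _ => ?_
      rw [hg j, add_smul, add_smul, smul_smul, smul_smul,
        mul_comm (tA3 k) (algebraMap k (A3 k) (c1 j)),
        mul_comm (tA3 k ^ 2) (algebraMap k (A3 k) (c2 j))]
    have hy0mem : y0 ∈ tSub k M := by
      have hd := hdecomp
      rw [add_assoc] at hd
      have hy0eq : y0 = -(tA3 k • y1 + tA3 k ^ 2 • y2) := eq_neg_of_add_eq_zero_left hd
      rw [hy0eq]
      refine Submodule.neg_mem _ (Submodule.add_mem _ ⟨y1, rfl⟩ ?_)
      exact ⟨tA3 k • y2, by rw [LinearMap.lsmul_apply, smul_smul, ← sq]⟩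
    have hc0 : ∀ j ∈ s, c0 j = 0 := hcoef s c0 hy0mem
    have hy0z : y0 = 0 := by
      rw [hy0def]
      exact Finset.sum_eq_zero fun j hj => by rw [hc0 j hj, map_zero]; exact zero_smul (A3 k) (m j)
    have hd1 : tA3 k • y1 + tA3 k ^ 2 • y2 = 0 := by
      have hd := hdecomp
      rwa [hy0z, zero_add] at hd
    have hstep2 : tA3 k • (y1 + tA3 k • y2) = 0 := by
      rw [smul_add, smul_smul, ← sq]
      exact hd1
    have hy12 : y1 + tA3 k • y2 ∈ t2Sub k M := hk1 _ hstep2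
    have hy1mem : y1 ∈ tSub k M := by
      have h1 : y1 + tA3 k • y2 ∈ tSub k M := t2Sub_le_tSub k M hy12
      have h2 : tA3 k • y2 ∈ tSub k M := ⟨y2, rfl⟩
      have : y1 = (y1 + tA3 k • y2) - tA3 k • y2 := by abel
      rw [this]
      exact Submodule.sub_mem _ h1 h2
    have hc1 : ∀ j ∈ s, c1 j = 0 := hcoef s c1 hy1mem
    have hy1z : y1 = 0 := by
      rw [hy1def]
      exact Finset.sum_eq_zero fun j hj => by rw [hc1 j hj, map_zero]; exact zero_smul (A3 k) (m j)
    have hstep3 : tA3 k ^ 2 • y2 = 0 := by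
      have hd := hd1
      rwa [hy1z, smul_zero, zero_add] at hd
    have hy2mem : y2 ∈ tSub k M := hk2 _ hstep3
    have hc2 : ∀ j ∈ s, c2 j = 0 := hcoef s c2 hy2mem
    rw [hg i, hc0 i hi, hc1 i hi, hc2 i hi]
    simp
  exact Module.Free.of_basis (Module.Basis.mk hli (fun x _ => hNtop x))

lemma mulTmap_apply (x : tSub k M) :
    (mulTmap k M (Submodule.Quotient.mk x) : M) = tA3 k • (x : M) := rfl

lemma mulT2map_apply (x : M) :
    (mulT2map k M (Submodule.Quotient.mk x) : M) = tA3 k ^ 2 • x := rfl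

lemma mulTmap_surjective : Function.Surjective (mulTmap k M) := by
  rintro ⟨z, hz⟩
  obtain ⟨y, hy⟩ := hz
  rw [LinearMap.lsmul_apply] at hy
  refine ⟨Submodule.Quotient.mk ⟨tA3 k • y, ⟨y, rfl⟩⟩, ?_⟩
  apply Subtype.ext
  rw [mulTmap_apply]
  show tA3 k • tA3 k • y = z
  rw [smul_smul, ← sq, hy]

lemma mulT2map_surjective : Function.Surjective (mulT2map k M) := by
  rintro ⟨z, hz⟩
  obtain ⟨y, hy⟩ := hz
  rw [LinearMap.lsmul_apply] at hy
  exact ⟨Submodule.Quotient.mk y, Subtype.ext (by rw [mulT2map_apply]; exact hy)⟩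

lemma mulT2map_injective_of_flat [Module.Flat (A3 k) M] :
    Function.Injective (mulT2map k M) := by
  refine LinearMap.ker_eq_bot.mp (LinearMap.ker_eq_bot'.mpr ?_)
  intro z hz
  obtain ⟨x, rfl⟩ := Submodule.Quotient.mk_surjective _ z
  have hx : tA3 k ^ 2 • x = 0 := by
    have h := congrArg Subtype.val hz
    rwa [mulT2map_apply] at h
  rw [Submodule.Quotient.mk_eq_zero]
  exact flat_ker_t2 k M x hx

lemma mulTmap_injective_of_flat [Module.Flat (A3 k) M] :
    Function.Injective (mulTmap k M) := by
  refine LinearMap.ker_eq_bot.mp (LinearMap.ker_eq_bot'.mpr ?_)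
  intro z hz
  obtain ⟨x, rfl⟩ := Submodule.Quotient.mk_surjective _ z
  have hx : tA3 k • (x : M) = 0 := by
    have h := congrArg Subtype.val hz
    rwa [mulTmap_apply] at h
  rw [Submodule.Quotient.mk_eq_zero, Submodule.mem_comap]
  exact flat_ker_t k M x hx

lemma ker_t2_of_inj (h : Function.Injective (mulT2map k M)) :
    ∀ x : M, tA3 k ^ 2 • x = 0 → x ∈ tSub k M := by
  intro x hx
  have h0 : mulT2map k M (Submodule.Quotient.mk x) = mulT2map k M 0 := by
    rw [map_zero]
    exact Subtype.ext (by rw [mulT2map_apply]; exact hx)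
  have := h h0
  rwa [← Submodule.Quotient.mk_eq_zero (tSub k M)]

lemma ker_t_of_inj (h1 : Function.Injective (mulTmap k M))
    (h2 : Function.Injective (mulT2map k M)) :
    ∀ x : M, tA3 k • x = 0 → x ∈ t2Sub k M := by
  intro x hx
  have hx2 : tA3 k ^ 2 • x = 0 := by
    rw [sq, mul_smul, hx, smul_zero]
  have hxt : x ∈ tSub k M := ker_t2_of_inj k M h2 x hx2
  have h0 : mulTmap k M (Submodule.Quotient.mk ⟨x, hxt⟩) = mulTmap k M 0 := by
    rw [map_zero]
    exact Subtype.ext (by rw [mulTmap_apply]; exact hx)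
  have hq := h1 h0
  rw [Submodule.Quotient.mk_eq_zero, Submodule.mem_comap] at hq
  exact hq

/-- For `A = k[t]/(t³)`, an `A`-module `M` is flat iff the maps
`tM/t²M → t²M` (multiplication by `t`) and `M/tM → t²M` (multiplication by `t²`)
are both isomorphisms, iff `M` is free. -/
theorem flat_iff_A3 :
    (Module.Flat (A3 k) M ↔
      (Function.Bijective (mulTmap k M) ∧ Function.Bijective (mulT2map k M))) ∧
    (Module.Flat (A3 k) M ↔ Module.Free (A3 k) M) := by
  have imp1 : Module.Flat (A3 k) M →
      Function.Bijective (mulTmap k M) ∧ Function.Bijective (mulT2map k M) := by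
    intro hf
    haveI := hf
    exact ⟨⟨mulTmap_injective_of_flat k M, mulTmap_surjective k M⟩,
      ⟨mulT2map_injective_of_flat k M, mulT2map_surjective k M⟩⟩
  have imp2 : (Function.Bijective (mulTmap k M) ∧ Function.Bijective (mulT2map k M)) →
      Module.Free (A3 k) M := by
    rintro ⟨⟨h1i, _⟩, ⟨h2i, _⟩⟩
    exact free_of_conditions k M (ker_t_of_inj k M h1i h2i) (ker_t2_of_inj k M h2i)
  have imp3 : Module.Free (A3 k) M → Module.Flat (A3 k) M := by
    intro h
    haveI := h
    exact Module.Flat.of_free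
  exact ⟨⟨fun hf => imp1 hf, fun hc => imp3 (imp2 hc)⟩,
    ⟨fun hf => imp2 (imp1 hf), imp3⟩⟩


end
end

section
/- Let a < b be real numbers and f, g : [a,b] → ℝ be twice continuously differentiable functions with f(a) = g(a), f(b) = g(b), f ≤ g on [a,b], and f concave (i.e. f'' ≤ 0 on [a,b]). Then ∫ₐᵇ f'(x)² dx ≤ ∫ₐᵇ g'(x)² dx. -/
open Set intervalIntegral

/-- If `f, g` are C² on `[a,b]`, agree at the endpoints, `f ≤ g` on `[a,b]` and `f` is
concave (`f'' ≤ 0`), then `∫ₐᵇ f'² ≤ ∫ₐᵇ g'²`. -/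
theorem integral_sq_deriv_le (a b : ℝ) (hab : a < b)
    (f g f' g' f'' g'' : ℝ → ℝ)
    (hf : ∀ x ∈ Icc a b, HasDerivAt f (f' x) x)
    (hf' : ∀ x ∈ Icc a b, HasDerivAt f' (f'' x) x)
    (hg : ∀ x ∈ Icc a b, HasDerivAt g (g' x) x)
    (hg' : ∀ x ∈ Icc a b, HasDerivAt g' (g'' x) x)
    (hf''c : ContinuousOn f'' (Icc a b))
    (hg''c : ContinuousOn g'' (Icc a b))
    (ha : f a = g a) (hb : f b = g b)
    (hle : ∀ x ∈ Icc a b, f x ≤ g x)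
    (hconc : ∀ x ∈ Icc a b, f'' x ≤ 0) :
    ∫ x in a..b, (f' x) ^ 2 ≤ ∫ x in a..b, (g' x) ^ 2 := by
  have huIcc : uIcc a b = Icc a b := uIcc_of_le hab.le
  have hfc : ContinuousOn f (Icc a b) := fun x hx => (hf x hx).continuousAt.continuousWithinAt
  have hgc : ContinuousOn g (Icc a b) := fun x hx => (hg x hx).continuousAt.continuousWithinAt
  have hf'c : ContinuousOn f' (Icc a b) := fun x hx => (hf' x hx).continuousAt.continuousWithinAt
  have hg'c : ContinuousOn g' (Icc a b) := fun x hx => (hg' x hx).continuousAt.continuousWithinAt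
  -- integrability facts
  have If2 : IntervalIntegrable (fun x => (f' x) ^ 2) MeasureTheory.volume a b :=
    ((hf'c.pow 2).mono (by rw [huIcc])).intervalIntegrable
  have Ig2 : IntervalIntegrable (fun x => (g' x) ^ 2) MeasureTheory.volume a b :=
    ((hg'c.pow 2).mono (by rw [huIcc])).intervalIntegrable
  have Icross : IntervalIntegrable (fun x => f' x * (g' x - f' x)) MeasureTheory.volume a b :=
    ((hf'c.mul (hg'c.sub hf'c)).mono (by rw [huIcc])).intervalIntegrable
  have Ih2 : IntervalIntegrable (fun x => (g' x - f' x) ^ 2) MeasureTheory.volume a b :=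
    (((hg'c.sub hf'c).pow 2).mono (by rw [huIcc])).intervalIntegrable
  have If'' : IntervalIntegrable f'' MeasureTheory.volume a b :=
    (hf''c.mono (by rw [huIcc])).intervalIntegrable
  have Ifh : IntervalIntegrable (fun x => f'' x * (g x - f x)) MeasureTheory.volume a b :=
    ((hf''c.mul (hgc.sub hfc)).mono (by rw [huIcc])).intervalIntegrable
  -- integration by parts: ∫ f' * (g' - f') = - ∫ f'' * (g - f)
  have ibp : ∫ x in a..b, f' x * (g' x - f' x)
      = f' b * (g b - f b) - f' a * (g a - f a) - ∫ x in a..b, f'' x * (g x - f x) := by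
    apply integral_mul_deriv_eq_deriv_mul
    · intro x hx; exact hf' x (huIcc ▸ hx)
    · intro x hx; exact (hg x (huIcc ▸ hx)).sub (hf x (huIcc ▸ hx))
    · exact (hf''c.mono (by rw [huIcc])).intervalIntegrable
    · exact (((hg'c.sub hf'c)).mono (by rw [huIcc])).intervalIntegrable
  have hI : (∫ x in a..b, f'' x * (g x - f x)) ≤ 0 := by
    have h0 : 0 ≤ ∫ x in a..b, -(f'' x * (g x - f x)) := by
      apply integral_nonneg hab.le
      intro x hx
      have := mul_nonpos_of_nonpos_of_nonneg (hconc x hx) (sub_nonneg.mpr (hle x hx))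
      linarith
    rw [integral_neg] at h0
    linarith
  have hcross_nonneg : 0 ≤ ∫ x in a..b, f' x * (g' x - f' x) := by
    rw [ibp, ha, hb]
    simp only [sub_self, mul_zero, zero_sub, sub_zero]
    linarith
  have hsq_nonneg : 0 ≤ ∫ x in a..b, (g' x - f' x) ^ 2 := by
    apply intervalIntegral.integral_nonneg hab.le
    intro x _; positivity
  have key : (∫ x in a..b, (g' x) ^ 2) - (∫ x in a..b, (f' x) ^ 2)
      = (∫ x in a..b, (g' x - f' x) ^ 2) + 2 * ∫ x in a..b, f' x * (g' x - f' x) := by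
    rw [← integral_sub Ig2 If2, ← integral_const_mul,
      ← integral_add Ih2 (Icross.const_mul 2)]
    apply integral_congr
    intro x _
    ring
  linarith
end

section
/- Let E be a module over a ring R, and let M ≤ N and M' ≤ N' be submodules of E. Set Q = M ⊔ (M' ⊓ N) and Q' = M' ⊔ (M ⊓ N'). Then Q ⊓ Q' = (M ⊓ N') ⊔ (M' ⊓ N). -/
/-- For submodules `M ≤ N` and `M' ≤ N'` of a module `E`, setting
`Q = M ⊔ (M' ⊓ N)` and `Q' = M' ⊔ (M ⊓ N')`, one has `Q ⊓ Q' = (M ⊓ N') ⊔ (M' ⊓ N)`. -/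
theorem Q_inf_Q'_eq (R : Type*) [Ring R] (E : Type*) [AddCommGroup E]
    [Module R E] (M N M' N' : Submodule R E) (hMN : M ≤ N) (hM'N' : M' ≤ N') :
    (M ⊔ (M' ⊓ N)) ⊓ (M' ⊔ (M ⊓ N')) = (M ⊓ N') ⊔ (M' ⊓ N) := by
  have h1 : M' ⊓ N ≤ M' ⊔ (M ⊓ N') := le_sup_of_le_left inf_le_left
  rw [sup_comm M _, sup_inf_assoc_of_le _ h1]
  have h2 : M ⊓ (M' ⊔ (M ⊓ N')) = M ⊓ N' := by
    rw [inf_comm M, sup_comm M', sup_inf_assoc_of_le _ inf_le_left,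
      sup_eq_left.2 (le_inf inf_le_right (inf_le_left.trans hM'N'))]
  rw [h2, sup_comm]
end

section
/- Let 𝒜 be an abelian category with enough projectives, E an object of 𝒜, and σ ∈ Ext¹(E, E) a class with associated extension 0 → E → E_σ → E → 0. Then there exists a class α ∈ Ext¹(E, E_σ) whose image under the map Ext¹(E, E_σ) → Ext¹(E, E) (induced by the projection E_σ → E) equals σ if and only if the Yoneda square σ · σ = 0 in Ext²(E, E). -/
open CategoryTheory CategoryTheory.Abelian

universe w v u

/-- For a class `σ ∈ Ext¹(E,E)` with associated extension `0 → E → E_σ → E → 0`, there is a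
class `α ∈ Ext¹(E, E_σ)` mapping to `σ` under the map induced by the projection `E_σ → E`
iff the Yoneda square `σ·σ` vanishes in `Ext²(E,E)`. -/
theorem ext_lift_iff_yoneda_square_zero {C : Type u} [Category.{v} C] [Abelian C]
    [EnoughProjectives C] [HasExt.{w} C] {E Eσ : C}
    (i : E ⟶ Eσ) (p : Eσ ⟶ E) (wS : i ≫ p = 0)
    (hS : (CategoryTheory.ShortComplex.mk i p wS).ShortExact)
    (σ : Ext E E 1) (hσ : hS.extClass = σ) :
    (∃ α : Ext E Eσ 1, α.comp (Ext.mk₀ p) (add_zero 1) = σ) ↔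
      σ.comp σ rfl = (0 : Ext E E 2) := by
  constructor
  · rintro ⟨α, rfl⟩
    rw [← hσ]; nth_rewrite 1 [hσ]
    rw [Ext.comp_assoc_of_second_deg_zero,
      show (Ext.mk₀ p).comp hS.extClass (zero_add 1) = 0 from hS.comp_extClass,
      Ext.comp_zero]
  · intro h
    exact Ext.covariant_sequence_exact₃ E hS σ rfl (by rw [hσ, h])
end
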